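/- With A, C, u, λ̲, Λ, γ, Γ as in the generalized eigenproblem setting, for any x with ‖x‖ = 1 the Rayleigh quotient λ(x) = ⟨A x, x⟩/⟨C x, x⟩ satisfies λ(x) − λ̲ ≤ (2Γ/γ)·λ(x)·‖(I − P)x‖², where P is the orthogonal projection onto the span of the eigenvector u. -/

import Mathlib

open scoped RealInnerProductSpace

/-- For any unit vector `x`, the Rayleigh quotient satisfies
`λ(x) - λ̲ ≤ (2Γ/γ)·λ(x)·‖(I - P)x‖²`, with `P` the orthogonal projection onto `span u`. -/
theorem stmt6 {H : Type*} [NormedAddCommGroup H] [InnerProductSpace ℝ H] [CompleteSpace H]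
    (A C : H →L[ℝ] H)
    (hAsymm : ∀ y z, ⟪A y, z⟫ = ⟪y, A z⟫) (hCsymm : ∀ y z, ⟪C y, z⟫ = ⟪y, C z⟫)
    (hCpos : ∀ y, y ≠ 0 → 0 < ⟪C y, y⟫)
    (γ Γ : ℝ) (hγ : 0 < γ)
    (hA : ∀ y, γ * ‖y‖ ^ 2 ≤ ⟪A y, y⟫ ∧ ⟪A y, y⟫ ≤ Γ * ‖y‖ ^ 2)
    (lam : ℝ) (hlam : 0 < lam) (u : H) (hu : u ≠ 0) (heig : A u = lam • C u)
    (hmin : ∀ y, y ≠ 0 → lam ≤ ⟪A y, y⟫ / ⟪C y, y⟫)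
    (x : H) (hx : ‖x‖ = 1) :
    ⟪A x, x⟫ / ⟪C x, x⟫ - lam ≤
      (2 * Γ / γ) * (⟪A x, x⟫ / ⟪C x, x⟫) * ‖x - (⟪x, u⟫ / ⟪u, u⟫) • u‖ ^ 2 := by
  set α : ℝ := ⟪x, u⟫ / ⟪u, u⟫ with hα
  set e : H := x - α • u with he
  have hxne : x ≠ 0 := by
    intro h; rw [h, norm_zero] at hx; norm_num at hx
  have hcx : 0 < ⟪C x, x⟫ := hCpos x hxne
  have hax : γ ≤ ⟪A x, x⟫ := by
    have := (hA x).1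
    rwa [hx, one_pow, mul_one] at this
  have hΓ : 0 < Γ := by
    have := (hA x).2
    rw [hx, one_pow, mul_one] at this
    linarith
  have hxe : x = α • u + e := by rw [he]; abel
  have hAuu : ⟪A u, u⟫ = lam * ⟪C u, u⟫ := by rw [heig, real_inner_smul_left]
  have hAue : ⟪A u, e⟫ = lam * ⟪C u, e⟫ := by rw [heig, real_inner_smul_left]
  have h1 : ⟪A e, u⟫ = ⟪A u, e⟫ := by rw [hAsymm, real_inner_comm]
  have h2 : ⟪C e, u⟫ = ⟪C u, e⟫ := by rw [hCsymm, real_inner_comm]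
  have hexp : ⟪A x, x⟫ - lam * ⟪C x, x⟫ = ⟪A e, e⟫ - lam * ⟪C e, e⟫ := by
    conv_lhs => rw [hxe]
    simp only [map_add, map_smul, inner_add_left, inner_add_right,
      real_inner_smul_left, real_inner_smul_right, ContinuousLinearMap.coe_smul',
      Pi.smul_apply, smul_eq_mul]
    linear_combination (α * α) * hAuu + α * hAue + α * h1 + α * hAue - lam * α * h2
  have hCe : 0 ≤ ⟪C e, e⟫ := by
    rcases eq_or_ne e 0 with h | h
    · simp [h]
    · exact le_of_lt (hCpos e h)
  have hAe : ⟪A e, e⟫ ≤ Γ * ‖e‖ ^ 2 := (hA e).2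
  have hkey : ⟪A x, x⟫ - lam * ⟪C x, x⟫ ≤ Γ * ‖e‖ ^ 2 := by
    rw [hexp]
    nlinarith [hCe, hAe]
  have hgoal : ⟪A x, x⟫ - lam * ⟪C x, x⟫ ≤ (2 * Γ / γ) * ⟪A x, x⟫ * ‖e‖ ^ 2 := by
    have h3 : Γ * ‖e‖ ^ 2 ≤ (2 * Γ / γ) * ⟪A x, x⟫ * ‖e‖ ^ 2 := by
      have hfac : Γ ≤ (2 * Γ / γ) * ⟪A x, x⟫ := by
        rw [div_mul_eq_mul_div, le_div_iff₀ hγ]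
        nlinarith
      nlinarith [sq_nonneg ‖e‖]
    linarith
  calc ⟪A x, x⟫ / ⟪C x, x⟫ - lam = (⟪A x, x⟫ - lam * ⟪C x, x⟫) / ⟪C x, x⟫ := by
        field_simp
    _ ≤ ((2 * Γ / γ) * ⟪A x, x⟫ * ‖e‖ ^ 2) / ⟪C x, x⟫ := by
        gcongr
    _ = (2 * Γ / γ) * (⟪A x, x⟫ / ⟪C x, x⟫) * ‖e‖ ^ 2 := by ring
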